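/- (Lemma 2, determinantal form) Let L = Σ_{n=1}^N λ_n v_n v_nᵀ be an N×N real symmetric matrix with orthonormal eigenvectors v_1,…,v_N and eigenvalues λ_n ≥ 0. Then for every subset Y ⊆ {1,…,N}, det(L_Y) = Σ_{J ⊆ {1,…,N}, |J| = |Y|} (Π_{n∈J} λ_n) · det((Σ_{n∈J} v_n v_nᵀ)_Y). Consequently, the L-ensemble probability det(L_Y)/det(L+I) equals the mixture Σ_{J, |J|=|Y|} det((K^{V_J})_Y) · (Π_{n∈J} λ_n/(1+λ_n)) · (Π_{n∉J} 1/(1+λ_n)), where K^{V_J} = Σ_{n∈J} v_n v_nᵀ; i.e., a DPP is a mixture of elementary DPPs. -/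

import Mathlib

open Finset

/-- Multilinear expansion of a principal minor of a sum of scaled rank-one matrices. -/
lemma det_sum_rank_one_expand {N : ℕ} (Y : Finset (Fin N)) (c : Fin N → ℝ)
    (v : Fin N → Fin N → ℝ) (J : Finset (Fin N)) :
    (Matrix.of fun i j : ↥Y => ∑ n ∈ J, c n * (v n (i : Fin N) * v n (j : Fin N))).det
      = ∑ r ∈ Fintype.piFinset (fun _ : ↥Y => J),
          (∏ i : ↥Y, (c (r i) * v (r i) (i : Fin N))) *
            (Matrix.of fun i j : ↥Y => v (r i) (j : Fin N)).det := by
  classical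
  have h : (Matrix.of fun i j : ↥Y => ∑ n ∈ J, c n * (v n (i : Fin N) * v n (j : Fin N)))
      = fun i : ↥Y => ∑ n ∈ J, (c n * v n (i : Fin N)) • (fun j : ↥Y => v n (j : Fin N)) := by
    funext i j
    simp only [Matrix.of_apply, Finset.sum_apply, Pi.smul_apply, smul_eq_mul]
    ring_nf
  show (Matrix.detRowAlternating
      (Matrix.of fun i j : ↥Y => ∑ n ∈ J, c n * (v n (i : Fin N) * v n (j : Fin N)))) = _
  rw [h]
  erw [(Matrix.detRowAlternating (R := ℝ) (n := ↥Y)).toMultilinearMap.map_sum_finset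
    (fun (i : ↥Y) (n : Fin N) => (c n * v n (i : Fin N)) • (fun j : ↥Y => v n (j : Fin N)))
    (fun _ => J)]
  refine Finset.sum_congr rfl fun r _ => ?_
  erw [(Matrix.detRowAlternating (R := ℝ) (n := ↥Y)).toMultilinearMap.map_smul_univ
    (fun i : ↥Y => c (r i) * v (r i) (i : Fin N))
    (fun i : ↥Y => (fun j : ↥Y => v (r i) (j : Fin N)))]
  rw [smul_eq_mul]
  rfl

/-- The principal submatrix of `L` indexed by the subset `Y`. -/
noncomputable def principalMinor {N : ℕ} (L : Matrix (Fin N) (Fin N) ℝ)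
    (Y : Finset (Fin N)) : ℝ :=
  (L.submatrix (fun i : Y => (i : Fin N)) (fun j : Y => (j : Fin N))).det

/-- Lemma 2 (determinantal form): for `L = Σ_n λ_n v_n v_nᵀ` with orthonormal
eigenvectors and nonnegative eigenvalues, every principal minor of `L` expands as
`det(L_Y) = Σ_{|J| = |Y|} (Π_{n∈J} λ_n) det((K^{V_J})_Y)` where
`K^{V_J} = Σ_{n∈J} v_n v_nᵀ`; consequently the L-ensemble probability
`det(L_Y)/det(L+I)` is the corresponding mixture of elementary DPPs. -/
theorem dpp_mixture_of_elementary {N : ℕ} (v : Fin N → (Fin N → ℝ))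
    (lam : Fin N → ℝ) (hlam : ∀ n, 0 ≤ lam n)
    (hv : ∀ m l : Fin N, dotProduct (v m) (v l) = if m = l then (1 : ℝ) else 0)
    (L : Matrix (Fin N) (Fin N) ℝ)
    (hL : L = ∑ n : Fin N, lam n • Matrix.vecMulVec (v n) (v n))
    (Y : Finset (Fin N)) :
    principalMinor L Y
      = ∑ J ∈ Finset.univ.filter (fun J : Finset (Fin N) => J.card = Y.card),
          (∏ n ∈ J, lam n) *
            principalMinor (∑ n ∈ J, Matrix.vecMulVec (v n) (v n)) Y ∧
    principalMinor L Y / (L + 1).det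
      = ∑ J ∈ Finset.univ.filter (fun J : Finset (Fin N) => J.card = Y.card),
          principalMinor (∑ n ∈ J, Matrix.vecMulVec (v n) (v n)) Y *
            (∏ n ∈ J, lam n / (1 + lam n)) * (∏ n ∈ Jᶜ, 1 / (1 + lam n)) := by
  classical
  -- the "elementary determinant" attached to a choice function `r`
  set w : (↥Y → Fin N) → ℝ :=
    fun r => (Matrix.of fun i j : ↥Y => v (r i) (j : Fin N)).det with hw
  have hw0 : ∀ r : ↥Y → Fin N, ¬ Function.Injective r → w r = 0 := by
    intro r hr
    rw [Function.not_injective_iff] at hr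
    obtain ⟨i, j, hij, hne⟩ := hr
    exact Matrix.det_zero_of_row_eq hne (by funext k; simp [hij])
  -- expansion of principal minors
  have hpm : ∀ (c : Fin N → ℝ) (J : Finset (Fin N)),
      principalMinor (∑ n ∈ J, c n • Matrix.vecMulVec (v n) (v n)) Y
        = ∑ r ∈ Fintype.piFinset (fun _ : ↥Y => J),
            (∏ i : ↥Y, (c (r i) * v (r i) (i : Fin N))) * w r := by
    intro c J
    have hsub : (∑ n ∈ J, c n • Matrix.vecMulVec (v n) (v n)).submatrix
        (fun i : Y => (i : Fin N)) (fun j : Y => (j : Fin N))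
        = Matrix.of fun i j : ↥Y => ∑ n ∈ J, c n * (v n (i : Fin N) * v n (j : Fin N)) := by
      ext i j
      simp [Matrix.sum_apply, Matrix.vecMulVec_apply]
    rw [principalMinor, hsub, det_sum_rank_one_expand]
  have hKpm : ∀ J : Finset (Fin N),
      principalMinor (∑ n ∈ J, Matrix.vecMulVec (v n) (v n)) Y
        = ∑ r ∈ Fintype.piFinset (fun _ : ↥Y => J),
            (∏ i : ↥Y, v (r i) (i : Fin N)) * w r := by
    intro J
    have h := hpm (fun _ => (1 : ℝ)) J
    simpa [one_smul, one_mul] using h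
  have hLpm : principalMinor L Y
      = ∑ r ∈ Fintype.piFinset (fun _ : ↥Y => (Finset.univ : Finset (Fin N))),
          (∏ i : ↥Y, (lam (r i) * v (r i) (i : Fin N))) * w r := by
    rw [hL]; exact hpm lam Finset.univ
  -- characterize injective choice functions landing in a set of the right size
  have hcard : Fintype.card ↥Y = Y.card := Fintype.card_coe Y
  have hfilterEq : ∀ J : Finset (Fin N), J.card = Y.card →
      (Fintype.piFinset (fun _ : ↥Y => J)).filter (fun r => Function.Injective r)
        = (Finset.univ : Finset (↥Y → Fin N)).filter
            (fun r => Function.Injective r ∧ Finset.image r Finset.univ = J) := by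
    intro J hJ
    ext r
    simp only [Finset.mem_filter, Fintype.mem_piFinset, Finset.mem_univ, true_and]
    constructor
    · rintro ⟨hmem, hinj⟩
      refine ⟨hinj, ?_⟩
      have hsub : Finset.image r Finset.univ ⊆ J :=
        Finset.image_subset_iff.mpr fun i _ => hmem i
      have hc : (Finset.image r Finset.univ).card = J.card := by
        rw [Finset.card_image_of_injective _ hinj, Finset.card_univ, hcard, hJ]
      exact Finset.eq_of_subset_of_card_le hsub (le_of_eq hc.symm)
    · rintro ⟨hinj, himg⟩
      exact ⟨fun i => himg ▸ Finset.mem_image_of_mem r (Finset.mem_univ i), hinj⟩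
  -- Part 1
  have part1 : principalMinor L Y
      = ∑ J ∈ Finset.univ.filter (fun J : Finset (Fin N) => J.card = Y.card),
          (∏ n ∈ J, lam n) *
            principalMinor (∑ n ∈ J, Matrix.vecMulVec (v n) (v n)) Y := by
    have step1 : ∀ J ∈ Finset.univ.filter (fun J : Finset (Fin N) => J.card = Y.card),
        (∏ n ∈ J, lam n) * principalMinor (∑ n ∈ J, Matrix.vecMulVec (v n) (v n)) Y
          = ∑ r ∈ (Finset.univ.filter (fun r : ↥Y → Fin N => Function.Injective r)).filter
              (fun r => Finset.image r Finset.univ = J),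
              (∏ i : ↥Y, (lam (r i) * v (r i) (i : Fin N))) * w r := by
      intro J hJ
      rw [Finset.mem_filter] at hJ
      rw [hKpm J, Finset.mul_sum]
      rw [← Finset.sum_filter_of_ne (p := fun r : ↥Y → Fin N => Function.Injective r)
        (fun r _ hne => by
          by_contra hni
          exact hne (by rw [hw0 r hni]; ring))]
      rw [hfilterEq J hJ.2, Finset.filter_filter]
      refine Finset.sum_congr (by simp [and_comm]) fun r hr => ?_
      rw [Finset.mem_filter] at hr
      obtain ⟨-, hinj, himg⟩ := (by simpa [and_comm] using hr :
        r ∈ Finset.univ ∧ Function.Injective r ∧ Finset.image r Finset.univ = J)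
      have hprod : ∏ n ∈ J, lam n = ∏ i : ↥Y, lam (r i) := by
        rw [← himg, Finset.prod_image (fun i _ j _ h => hinj h)]
      rw [hprod, Finset.prod_mul_distrib]
      ring
    rw [Finset.sum_congr rfl step1]
    rw [Finset.sum_fiberwise_of_maps_to (fun r hr => by
      rw [Finset.mem_filter] at hr
      simp only [Finset.mem_filter, Finset.mem_univ, true_and]
      rw [Finset.card_image_of_injective _ hr.2, Finset.card_univ, hcard])]
    rw [hLpm]
    rw [Finset.sum_filter_of_ne (fun r _ hne => by
      by_contra hni
      exact hne (by rw [hw0 r hni]; ring))]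
    simp [Fintype.piFinset_univ]
  refine ⟨part1, ?_⟩
  -- determinant of L + I
  have hone : ∀ n : Fin N, (0:ℝ) < 1 + lam n := fun n => by linarith [hlam n]
  have hne : ∀ n : Fin N, (1:ℝ) + lam n ≠ 0 := fun n => ne_of_gt (hone n)
  set Q : Matrix (Fin N) (Fin N) ℝ := Matrix.of fun i n => v n i with hQ
  have hQtQ : Q.transpose * Q = 1 := by
    ext m l
    simp only [Matrix.mul_apply, Matrix.transpose_apply, hQ, Matrix.of_apply,
      Matrix.one_apply]
    rw [← hv m l]
    simp [dotProduct]
  have hdetQ : Q.det * Q.det = 1 := by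
    have := congrArg Matrix.det hQtQ
    rwa [Matrix.det_mul, Matrix.det_transpose, Matrix.det_one] at this
  have hLdec : L = Q * Matrix.diagonal lam * Q.transpose := by
    rw [hL]
    ext i j
    simp only [Matrix.mul_apply, Matrix.diagonal_apply, Matrix.transpose_apply, hQ,
      Matrix.of_apply, Matrix.sum_apply, Matrix.smul_apply, Matrix.vecMulVec_apply,
      smul_eq_mul]
    refine Finset.sum_congr rfl fun n _ => ?_
    rw [Finset.sum_eq_single n (fun m _ hm => by simp [hm]) (by simp)]
    simp [mul_comm, mul_left_comm]
  have hdetLI : (L + 1).det = ∏ n : Fin N, (1 + lam n) := by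
    have hsplit : L + 1 = Q * Matrix.diagonal (fun n => 1 + lam n) * Q.transpose := by
      have : Matrix.diagonal (fun n : Fin N => (1:ℝ) + lam n)
          = 1 + Matrix.diagonal lam := by
        rw [← Matrix.diagonal_one, Matrix.diagonal_add]
      rw [this, Matrix.mul_add, Matrix.mul_one, Matrix.add_mul, hLdec,
        mul_eq_one_comm.mp hQtQ]
      abel
    rw [hsplit, Matrix.det_mul, Matrix.det_mul, Matrix.det_transpose,
      Matrix.det_diagonal]
    calc Q.det * (∏ n : Fin N, (1 + lam n)) * Q.det
        = (Q.det * Q.det) * ∏ n : Fin N, (1 + lam n) := by ring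
      _ = ∏ n : Fin N, (1 + lam n) := by rw [hdetQ, one_mul]
  rw [part1, hdetLI, Finset.sum_div]
  refine Finset.sum_congr rfl fun J _ => ?_
  have h1 : (∏ n ∈ J, (1 + lam n)) ≠ 0 := Finset.prod_ne_zero_iff.mpr fun n _ => hne n
  have h2 : (∏ n ∈ Jᶜ, (1 + lam n)) ≠ 0 := Finset.prod_ne_zero_iff.mpr fun n _ => hne n
  rw [← Finset.prod_mul_prod_compl J (fun n => 1 + lam n)]
  rw [Finset.prod_div_distrib]
  have h3 : ∏ n ∈ Jᶜ, (1:ℝ) / (1 + lam n) = 1 / ∏ n ∈ Jᶜ, (1 + lam n) := by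
    rw [Finset.prod_div_distrib, Finset.prod_const_one]
  rw [h3]
  field_simp
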